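/- Let X, Y be standard Borel spaces, E, F countable Borel equivalence relations on X, Y, with F nonsmooth and X uncountable. Then there is a Borel subset of the quotient space (X×Y, E×F) that does not belong to the product σ-algebra Bor(X/E) ⊗ Bor(Y/F). -/

import Mathlib

open MeasureTheory Set

/-- A subset of the quotient is Borel iff its preimage under the projection is Borel. -/
def QBorelSet {X : Type} [MeasurableSpace X] (E : Setoid X) (A : Set (Quotient E)) : Prop :=
  MeasurableSet (Quotient.mk E ⁻¹' A)

/-- A relation between quotient Borel spaces is Borel iff its pullback to the
product of the standard Borel spaces is Borel. -/
def QBorelRel {X Y : Type} [MeasurableSpace X] [MeasurableSpace Y]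
    (E : Setoid X) (F : Setoid Y) (R : Set (Quotient E × Quotient F)) : Prop :=
  MeasurableSet {p : X × Y | (Quotient.mk E p.1, Quotient.mk F p.2) ∈ R}

/-- A function between quotient Borel spaces is Borel iff its graph is a Borel relation. -/
def QBorelFun {X Y : Type} [MeasurableSpace X] [MeasurableSpace Y]
    (E : Setoid X) (F : Setoid Y) (f : Quotient E → Quotient F) : Prop :=
  MeasurableSet {p : X × Y | f (Quotient.mk E p.1) = Quotient.mk F p.2}

/-- `E` is a countable Borel equivalence relation. -/
def CBER {X : Type} [MeasurableSpace X] (E : Setoid X) : Prop :=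
  MeasurableSet {p : X × X | E.r p.1 p.2} ∧ ∀ x : X, {y | E.r x y}.Countable

/-- `E` is smooth: Borel reducible to equality on some standard Borel space. -/
def SmoothRel {X : Type} [MeasurableSpace X] (E : Setoid X) : Prop :=
  ∃ (Y : Type) (_ : MeasurableSpace Y) (_ : StandardBorelSpace Y) (f : X → Y),
    Measurable f ∧ ∀ x y : X, E.r x y ↔ f x = f y

namespace Stmt9Aux

abbrev CC := ℕ → Bool

/-! ### Cylinders -/

def cylL (l : List Bool) : Set CC := {x | ∀ i, i < l.length → x i = l.getD i false}

def res (x : CC) : ℕ → List Bool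
  | 0 => []
  | n + 1 => res x n ++ [x n]

@[simp] lemma res_length (x : CC) (n : ℕ) : (res x n).length = n := by
  induction n with
  | zero => rfl
  | succ n ih => simp [res, ih]

lemma res_getD (x : CC) {i n : ℕ} (h : i < n) : (res x n).getD i false = x i := by
  induction n with
  | zero => omega
  | succ n ih =>
    rcases Nat.lt_or_ge i n with h' | h'
    · rw [res, List.getD_append _ _ _ _ (by simpa using h')]; exact ih h'
    · have hi : i = n := by omega
      subst hi
      rw [res, List.getD_append_right _ _ _ _ (by simp)]
      simp

lemma prefix_getD {l l' : List Bool} (h : l <+: l') {i : ℕ} (hi : i < l.length) :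
    l'.getD i false = l.getD i false := by
  obtain ⟨t, rfl⟩ := h
  exact List.getD_append _ _ _ _ hi

lemma cylL_anti {l l' : List Bool} (h : l <+: l') : cylL l' ⊆ cylL l := by
  intro x hx i hi
  rw [hx i (lt_of_lt_of_le hi h.length_le), prefix_getD h hi]

lemma res_prefix (x : CC) {m n : ℕ} (h : m ≤ n) : res x m <+: res x n := by
  induction n with
  | zero => simp at h; simp [h]
  | succ n ih =>
    rcases Nat.lt_or_ge m (n+1) with h' | h'
    · exact (ih (by omega)).trans ⟨[x n], rfl⟩
    · have : m = n + 1 := by omega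
      simp [this]

lemma mem_cylL_res {x y : CC} {n : ℕ} : y ∈ cylL (res x n) ↔ ∀ i, i < n → y i = x i := by
  constructor
  · intro h i hi
    have := h i (by simpa using hi)
    rwa [res_getD x hi] at this
  · intro h i hi
    rw [res_length] at hi
    rw [res_getD x hi]
    exact h i hi

lemma self_mem_cylL_res (x : CC) (n : ℕ) : x ∈ cylL (res x n) :=
  mem_cylL_res.2 fun _ _ => rfl

lemma mem_cylL_iff_res {x : CC} {l : List Bool} : x ∈ cylL l ↔ res x l.length = l := by
  constructor
  · intro h
    apply List.ext_getElem (by simp)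
    intro i h1 h2
    have h1' : i < l.length := by simpa using h1
    rw [← List.getD_eq_getElem _ false h1, ← List.getD_eq_getElem _ false h2,
      res_getD x h1', h i h1']
  · intro h i hi
    rw [← h, res_getD x (by simpa using hi)]

lemma cylL_isOpen (l : List Bool) : IsOpen (cylL l) := by
  have : cylL l = ⋂ i : Fin l.length, (fun x : CC => x (i : ℕ)) ⁻¹' {l.getD (i : ℕ) false} := by
    ext x
    simp only [mem_iInter, mem_preimage, mem_singleton_iff]
    constructor
    · intro h i; exact h (i : ℕ) i.2
    · intro h i hi; exact h ⟨i, hi⟩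
  rw [this]
  exact isOpen_iInter_of_finite fun i => (isOpen_discrete _).preimage (continuous_apply _)

lemma cylL_measurableSet (l : List Bool) : MeasurableSet (cylL l) :=
  (cylL_isOpen l).measurableSet

lemma cylL_nonempty (l : List Bool) : (cylL l).Nonempty :=
  ⟨fun i => l.getD i false, fun _ _ => rfl⟩

/-- neighborhood basis -/
lemma exists_cyl_subset {U : Set CC} (hU : IsOpen U) {x : CC} (hx : x ∈ U) :
    ∃ n, cylL (res x n) ⊆ U := by
  obtain ⟨I, u, h1, h2⟩ := isOpen_pi_iff.1 hU x hx
  refine ⟨(I.sup id) + 1, fun y hy => h2 ?_⟩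
  intro a ha
  have : y a = x a := mem_cylL_res.1 hy a (by
    have := Finset.le_sup (f := id) ha
    simpa using Nat.lt_succ_of_le this)
  rw [this]
  exact (h1 a ha).2

lemma exists_cyl_prod_subset {U : Set (CC × CC)} (hU : IsOpen U) {x y : CC}
    (hx : (x, y) ∈ U) :
    ∃ n, cylL (res x n) ×ˢ cylL (res y n) ⊆ U := by
  obtain ⟨u, v, hu, hv, hxu, hyv, huv⟩ := isOpen_prod_iff.1 hU x y hx
  obtain ⟨n1, h1⟩ := exists_cyl_subset hu hxu
  obtain ⟨n2, h2⟩ := exists_cyl_subset hv hyv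
  refine ⟨max n1 n2, fun p hp => huv ⟨?_, ?_⟩⟩
  · exact h1 (cylL_anti (res_prefix x (le_max_left n1 n2)) hp.1)
  · exact h2 (cylL_anti (res_prefix y (le_max_right n1 n2)) hp.2)

/-! ### Baire category on `CC` -/

lemma singleton_compl_dense (y : CC) : Dense ({y}ᶜ : Set CC) := by
  rw [dense_iff_inter_open]
  intro U hU hne
  obtain ⟨x, hx⟩ := hne
  obtain ⟨n, hn⟩ := exists_cyl_subset hU hx
  refine ⟨fun i => if i < n then x i else !(y i),
    hn (mem_cylL_res.2 fun i hi => by simp [hi]), fun hmem => ?_⟩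
  have := congrFun hmem n
  simp at this

lemma countable_isMeagre {s : Set CC} (hs : s.Countable) : IsMeagre s := by
  rw [IsMeagre]
  have h : sᶜ = ⋂ y ∈ s, ({y}ᶜ : Set CC) := by
    rw [← compl_iUnion₂, biUnion_of_singleton]
  rw [h]
  exact (countable_bInter_mem hs).2 fun y _ =>
    residual_of_dense_open isOpen_compl_singleton (singleton_compl_dense y)

def secOpen (D : Set (CC × CC)) (l : List Bool) : Set CC := {x | ∃ y ∈ cylL l, (x, y) ∈ D}

lemma secOpen_isOpen {D : Set (CC × CC)} (hD : IsOpen D) (l : List Bool) :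
    IsOpen (secOpen D l) := by
  have h : secOpen D l = ⋃ y ∈ cylL l, {x | (x, y) ∈ D} := by
    ext x; simp [secOpen]
  rw [h]
  exact isOpen_biUnion fun y _ =>
    hD.preimage (Continuous.prodMk continuous_id continuous_const)

lemma secOpen_dense {D : Set (CC × CC)} (hDo : IsOpen D) (hDd : Dense D) (l : List Bool) :
    Dense (secOpen D l) := by
  rw [dense_iff_inter_open]
  rintro U hU ⟨x, hx⟩
  obtain ⟨n, hn⟩ := exists_cyl_subset hU hx
  obtain ⟨p, hpD, hpbox⟩ := hDd.exists_mem_open ((cylL_isOpen (res x n)).prod (cylL_isOpen l))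
    ((cylL_nonempty _).prod (cylL_nonempty _))
  exact ⟨p.1, hn hpbox.1, p.2, hpbox.2, by simpa using hpD⟩

lemma meager_sections {M : Set (CC × CC)} (hM : IsMeagre M) :
    ∃ G ∈ residual CC, ∀ x ∈ G, IsMeagre {y | (x, y) ∈ M} := by
  rw [IsMeagre] at hM
  obtain ⟨t, htM, htGδ, htd⟩ := mem_residual.1 hM
  obtain ⟨T, hTo, hTc, rfl⟩ := htGδ
  have hTd : ∀ D ∈ T, Dense D := fun D hD => htd.mono (sInter_subset_of_mem hD)
  refine ⟨⋂ D ∈ T, ⋂ l : List Bool, secOpen D l, ?_, ?_⟩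
  · exact (countable_bInter_mem hTc).2 fun D hD => countable_iInter_mem.2 fun l =>
      residual_of_dense_open (secOpen_isOpen (hTo D hD) l)
        (secOpen_dense (hTo D hD) (hTd D hD) l)
  · intro x hx
    simp only [mem_iInter] at hx
    have hres : {y | (x, y) ∈ ⋂₀ T} ∈ residual CC := by
      have h : {y | (x, y) ∈ ⋂₀ T} = ⋂ D ∈ T, {y | (x, y) ∈ D} := by
        ext y; simp
      rw [h]
      refine (countable_bInter_mem hTc).2 fun D hD => residual_of_dense_open
        ((hTo D hD).preimage (Continuous.prodMk continuous_const continuous_id)) ?_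
      rw [dense_iff_inter_open]
      rintro U hU ⟨y0, hy0⟩
      obtain ⟨n, hn⟩ := exists_cyl_subset hU hy0
      obtain ⟨y, hycyl, hyD⟩ := hx D hD (res y0 n)
      exact ⟨y, hn hycyl, hyD⟩
    have hcompl : IsMeagre ({y | (x, y) ∈ ⋂₀ T}ᶜ) := by
      rw [IsMeagre, compl_compl]; exact hres
    exact hcompl.mono fun y hy hyt => htM hyt hy

lemma not_meagre_of_open_nonempty {U : Set CC} (hU : IsOpen U) (hne : U.Nonempty) :
    ¬ IsMeagre U := by
  letI := TopologicalSpace.upgradeIsCompletelyMetrizable CC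
  intro h
  have hd : Dense Uᶜ := dense_of_mem_residual h
  obtain ⟨z, _, hzc⟩ := dense_iff_inter_open.1 hd U hU hne
  exact hzc ‹z ∈ U›

lemma meager_of_countable_sections {S : Set (CC × CC)} (hS : MeasurableSet S)
    (hsec : ∀ x, {y | (x, y) ∈ S}.Countable) : IsMeagre S := by
  obtain ⟨U, hUo, hSU⟩ := hS.baireMeasurableSet.residualEq_isOpen
  set R : Set (CC × CC) := {p | p ∈ S ↔ p ∈ U} with hRdef
  have hR : R ∈ residual (CC × CC) := by
    have := Filter.eventuallyEq_set.1 hSU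
    exact this
  have hRc : IsMeagre Rᶜ := by rw [IsMeagre, compl_compl]; exact hR
  by_cases hUne : U.Nonempty
  · exfalso
    obtain ⟨⟨x0, y0⟩, hp⟩ := hUne
    obtain ⟨n, hbox⟩ := exists_cyl_prod_subset hUo hp
    obtain ⟨G, hG, hGsec⟩ := meager_sections hRc
    obtain ⟨x, hxcyl, hxG⟩ := dense_iff_inter_open.1 (dense_of_mem_residual hG) _
      (cylL_isOpen (res x0 n)) (cylL_nonempty _)
    have hsub : cylL (res y0 n) ⊆ {y | (x, y) ∈ S} ∪ {y | (x, y) ∈ Rᶜ} := by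
      intro y hy
      have hU' : (x, y) ∈ U := hbox ⟨hxcyl, hy⟩
      by_cases h : (x, y) ∈ Rᶜ
      · exact Or.inr h
      · exact Or.inl ((not_not.1 h).mpr hU')
    have hmg : IsMeagre ({y | (x, y) ∈ S} ∪ {y | (x, y) ∈ Rᶜ}) := by
      rw [IsMeagre, compl_union]
      exact Filter.inter_mem (countable_isMeagre (hsec x)) (hGsec x hxG)
    exact not_meagre_of_open_nonempty (cylL_isOpen (res y0 n)) (cylL_nonempty _)
      (hmg.mono hsub)
  · have hU0 : U = ∅ := not_nonempty_iff_eq_empty.1 hUne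
    refine hRc.mono ?_
    intro p hp hpR
    have : p ∈ U := hpR.mp hp
    rw [hU0] at this
    exact this

/-! ### The scheme construction (Mycielski-style) -/

lemma prefix_of_mem_cylL {x : CC} {l : List Bool} (h : x ∈ cylL l) {m : ℕ}
    (hm : l.length ≤ m) : l <+: res x m := by
  conv_lhs => rw [← mem_cylL_iff_res.1 h]
  exact res_prefix x hm

lemma exists_box_ext {D : Set (CC × CC)} (hDo : IsOpen D) (hDd : Dense D) (u v : List Bool) :
    ∃ u' v' : List Bool, u <+: u' ∧ v <+: v' ∧ cylL u' ×ˢ cylL v' ⊆ D := by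
  obtain ⟨p, hpD, hpbox⟩ := hDd.exists_mem_open ((cylL_isOpen u).prod (cylL_isOpen v))
    ((cylL_nonempty _).prod (cylL_nonempty _))
  obtain ⟨n, hn⟩ := exists_cyl_prod_subset hDo (show (p.1, p.2) ∈ D by simpa using hpD)
  refine ⟨res p.1 (max n (max u.length v.length)), res p.2 (max n (max u.length v.length)),
    prefix_of_mem_cylL hpbox.1 (by omega), prefix_of_mem_cylL hpbox.2 (by omega), ?_⟩
  intro q hq
  exact hn ⟨cylL_anti (res_prefix p.1 (le_max_left _ _)) hq.1,
    cylL_anti (res_prefix p.2 (le_max_left _ _)) hq.2⟩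

/-- One step of the fusion: handle a finite list of constraints. -/
lemma fold_ext {D : ℕ → Set (CC × CC)} (hD : ∀ n, IsOpen (D n) ∧ Dense (D n)) :
    ∀ (L : List (List Bool × List Bool × ℕ)) (f₀ : List Bool → List Bool),
      ∃ f : List Bool → List Bool, (∀ s, f₀ s <+: f s) ∧
        ∀ q ∈ L, q.1 ≠ q.2.1 → cylL (f q.1) ×ˢ cylL (f q.2.1) ⊆ D q.2.2 := by
  intro L
  induction L with
  | nil => exact fun f₀ => ⟨f₀, fun s => List.prefix_refl _, by simp⟩
  | cons a L ih =>
    intro f₀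
    obtain ⟨f', h1, h2⟩ := ih f₀
    by_cases hne : a.1 = a.2.1
    · refine ⟨f', h1, fun q hq hqne => ?_⟩
      rcases List.mem_cons.1 hq with rfl | hq
      · exact absurd hne hqne
      · exact h2 q hq hqne
    · obtain ⟨u', v', hu, hv, hbox⟩ :=
        exists_box_ext (hD a.2.2).1 (hD a.2.2).2 (f' a.1) (f' a.2.1)
      classical
      set g := Function.update (Function.update f' a.1 u') a.2.1 v' with hg
      have hga1 : g a.1 = u' := by
        rw [hg, Function.update_of_ne hne, Function.update_self]
      have hga2 : g a.2.1 = v' := by rw [hg, Function.update_self]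
      have hext : ∀ s, f' s <+: g s := by
        intro s
        rcases eq_or_ne s a.2.1 with rfl | h21
        · rw [hga2]; exact hv
        rcases eq_or_ne s a.1 with rfl | h11
        · rw [hga1]; exact hu
        · rw [hg, Function.update_of_ne h21, Function.update_of_ne h11]
      refine ⟨g, fun s => (h1 s).trans (hext s), fun q hq hqne => ?_⟩
      rcases List.mem_cons.1 hq with rfl | hq
      · rw [hga1, hga2]; exact hbox
      · intro p hp
        exact h2 q hq hqne ⟨cylL_anti (hext q.1) hp.1, cylL_anti (hext q.2.1) hp.2⟩

/-- all binary strings of length `n` -/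
def strs : ℕ → List (List Bool)
  | 0 => [[]]
  | n + 1 => (strs n).flatMap fun l => [l ++ [false], l ++ [true]]

lemma mem_strs : ∀ {n : ℕ} {l : List Bool}, l.length = n → l ∈ strs n := by
  intro n
  induction n with
  | zero => intro l hl; rw [List.length_eq_zero_iff.1 hl]; exact List.mem_singleton.2 rfl
  | succ n ih =>
    intro l hl
    have hne : l ≠ [] := by intro h; rw [h] at hl; simp at hl
    have hsplit : l.dropLast ++ [l.getLast hne] = l := List.dropLast_append_getLast hne
    have hdl : l.dropLast ∈ strs n := ih (by rw [List.length_dropLast, hl]; rfl)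
    rw [strs, List.mem_flatMap]
    refine ⟨l.dropLast, hdl, ?_⟩
    cases h : l.getLast hne
    · rw [← hsplit, h]; simp
    · rw [← hsplit, h]; simp

def trips (n : ℕ) : List (List Bool × List Bool × ℕ) :=
  (strs n).flatMap fun s => (strs n).flatMap fun t => (List.range (n + 1)).map fun k => (s, t, k)

lemma mem_trips {n : ℕ} {s t : List Bool} {k : ℕ} (hs : s.length = n) (ht : t.length = n)
    (hk : k ≤ n) : (s, t, k) ∈ trips n := by
  rw [trips, List.mem_flatMap]
  refine ⟨s, mem_strs hs, ?_⟩
  rw [List.mem_flatMap]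
  refine ⟨t, mem_strs ht, ?_⟩
  rw [List.mem_map]
  exact ⟨k, List.mem_range.2 (by omega), rfl⟩

variable {D : ℕ → Set (CC × CC)}

/-- The fusion scheme. -/
noncomputable def G (hD : ∀ n, IsOpen (D n) ∧ Dense (D n)) : ℕ → List Bool → List Bool
  | 0 => fun _ => []
  | n + 1 => Classical.choose
      (fold_ext hD (trips (n + 1)) (fun s => G hD n s.dropLast ++ [s.getLastD false]))

lemma G_spec (hD : ∀ n, IsOpen (D n) ∧ Dense (D n)) (n : ℕ) :
    (∀ s, G hD n s.dropLast ++ [s.getLastD false] <+: G hD (n + 1) s) ∧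
      ∀ q ∈ trips (n + 1), q.1 ≠ q.2.1 →
        cylL (G hD (n + 1) q.1) ×ˢ cylL (G hD (n + 1) q.2.1) ⊆ D q.2.2 :=
  Classical.choose_spec
    (fold_ext hD (trips (n + 1)) (fun s => G hD n s.dropLast ++ [s.getLastD false]))

lemma G_coh (hD : ∀ n, IsOpen (D n) ∧ Dense (D n)) (n : ℕ) (s : List Bool) (b : Bool) :
    G hD n s ++ [b] <+: G hD (n + 1) (s ++ [b]) := by
  have h := (G_spec hD n).1 (s ++ [b])
  rwa [List.dropLast_concat, List.getLastD_concat] at h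

lemma G_length (hD : ∀ n, IsOpen (D n) ∧ Dense (D n)) :
    ∀ n (s : List Bool), s.length = n → n ≤ (G hD n s).length := by
  intro n
  induction n with
  | zero => intro s _; exact Nat.zero_le _
  | succ n ih =>
    intro s hl
    have hne : s ≠ [] := by intro h; rw [h] at hl; simp at hl
    have hsplit : s.dropLast ++ [s.getLast hne] = s := List.dropLast_append_getLast hne
    have hcoh := G_coh hD n s.dropLast (s.getLast hne)
    rw [hsplit] at hcoh
    have := hcoh.length_le
    have hdl := ih s.dropLast (by rw [List.length_dropLast, hl]; rfl)
    simp only [List.length_append, List.length_cons, List.length_nil] at this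
    omega

lemma G_box (hD : ∀ n, IsOpen (D n) ∧ Dense (D n)) {n : ℕ} {s t : List Bool} {k : ℕ}
    (hs : s.length = n + 1) (ht : t.length = n + 1) (hne : s ≠ t) (hk : k ≤ n + 1) :
    cylL (G hD (n + 1) s) ×ˢ cylL (G hD (n + 1) t) ⊆ D k :=
  (G_spec hD n).2 (s, t, k) (mem_trips hs ht hk) hne

lemma G_chain (hD : ∀ n, IsOpen (D n) ∧ Dense (D n)) (a : CC) {m n : ℕ} (h : m ≤ n) :
    G hD m (res a m) <+: G hD n (res a n) := by
  induction n with
  | zero => have : m = 0 := by omega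
            subst this; exact List.prefix_refl _
  | succ n ih =>
    rcases Nat.lt_or_ge m (n + 1) with h' | h'
    · refine (ih (by omega)).trans ?_
      exact (List.prefix_append _ _).trans (G_coh hD n (res a n) (a n))
    · have : m = n + 1 := by omega
      subst this; exact List.prefix_refl _

lemma G_box' (hD : ∀ n, IsOpen (D n) ∧ Dense (D n)) {n : ℕ} {s t : List Bool} {k : ℕ}
    (hn : n ≠ 0) (hs : s.length = n) (ht : t.length = n) (hne : s ≠ t) (hk : k ≤ n) :
    cylL (G hD n s) ×ˢ cylL (G hD n t) ⊆ D k := by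
  obtain ⟨m, rfl⟩ := Nat.exists_eq_succ_of_ne_zero hn
  exact G_box hD hs ht hne hk

noncomputable def phi (hD : ∀ n, IsOpen (D n) ∧ Dense (D n)) : CC → CC :=
  fun a i => (G hD (i + 1) (res a (i + 1))).getD i false

lemma phi_mem_cylL (hD : ∀ n, IsOpen (D n) ∧ Dense (D n)) (a : CC) (n : ℕ) :
    phi hD a ∈ cylL (G hD n (res a n)) := by
  intro i hi
  rcases le_or_gt n (i + 1) with h | h
  · exact prefix_getD (G_chain hD a h) hi
  · have hlen : i < (G hD (i + 1) (res a (i + 1))).length :=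
      lt_of_lt_of_le (by omega) (G_length hD (i + 1) _ (res_length a (i + 1)))
    exact (prefix_getD (G_chain hD a (show i + 1 ≤ n by omega)) hlen).symm

lemma phi_measurable (hD : ∀ n, IsOpen (D n) ∧ Dense (D n)) : Measurable (phi hD) := by
  apply measurable_pi_lambda
  intro i
  apply measurable_to_countable
  intro a0
  have h : (fun a => phi hD a i) ⁻¹' {phi hD a0 i} =
      ⋃ (s : List Bool) (_ : s.length = i + 1 ∧ (G hD (i + 1) s).getD i false = phi hD a0 i),
        cylL s := by
    ext a
    simp only [mem_preimage, mem_singleton_iff, mem_iUnion]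
    constructor
    · intro hval
      exact ⟨res a (i + 1), ⟨res_length a _, hval⟩, self_mem_cylL_res a _⟩
    · rintro ⟨s, ⟨hlen, hval⟩, hmem⟩
      have hres : res a (i + 1) = s := by rw [← hlen]; exact mem_cylL_iff_res.1 hmem
      show (G hD (i + 1) (res a (i + 1))).getD i false = _
      rw [hres, hval]
  rw [h]
  exact MeasurableSet.iUnion fun s => MeasurableSet.iUnion fun _ => cylL_measurableSet s

/-- Mycielski-style theorem: a Borel relation on Cantor space with countable sections
admits a Borel map whose images of distinct points avoid the relation. -/
theorem mycielski {R : Set (CC × CC)} (hR : MeasurableSet R)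
    (hsec : ∀ x, {y | (x, y) ∈ R}.Countable) :
    ∃ φ : CC → CC, Measurable φ ∧ ∀ a b : CC, a ≠ b → (φ a, φ b) ∉ R := by
  have hmg := meager_of_countable_sections hR hsec
  rw [IsMeagre] at hmg
  obtain ⟨t, htR, htGδ, htd⟩ := mem_residual.1 hmg
  obtain ⟨T, hTo, hTc, rfl⟩ := htGδ
  obtain ⟨D, hDr⟩ := (hTc.insert univ).exists_eq_range (insert_nonempty _ _)
  have hD : ∀ n, IsOpen (D n) ∧ Dense (D n) := by
    intro n
    have hmem : D n ∈ insert univ T := by rw [hDr]; exact mem_range_self n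
    rcases mem_insert_iff.1 hmem with h | h
    · rw [h]; exact ⟨isOpen_univ, dense_univ⟩
    · exact ⟨hTo _ h, htd.mono (sInter_subset_of_mem h)⟩
  refine ⟨phi hD, phi_measurable hD, ?_⟩
  intro a b hab hmem
  have hex : ∃ i, a i ≠ b i := by
    by_contra hcon; push_neg at hcon; exact hab (funext hcon)
  obtain ⟨i, hi⟩ := hex
  have hin : (phi hD a, phi hD b) ∈ ⋂₀ T := by
    intro s hs
    have hsD : s ∈ range D := by rw [← hDr]; exact mem_insert_of_mem _ hs
    obtain ⟨k, rfl⟩ := hsD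
    have hne : res a (max k (i + 1)) ≠ res b (max k (i + 1)) := by
      intro hcon
      have h1 := res_getD a (show i < max k (i + 1) by omega)
      rw [hcon, res_getD b (show i < max k (i + 1) by omega)] at h1
      exact hi h1.symm
    exact G_box' hD (show max k (i + 1) ≠ 0 by omega) (res_length a _) (res_length b _) hne
      (le_max_left _ _) ⟨phi_mem_cylL hD a _, phi_mem_cylL hD b _⟩
  exact htR hin hmem

/-! ### Transfer to abstract standard Borel spaces -/

lemma not_countable_CC : ¬ Countable CC := by
  classical
  intro h
  have hinj : Function.Injective (fun (s : Set ℕ) => (fun n => decide (n ∈ s) : CC)) := by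
    intro s t hst
    ext n
    have := congrFun hst n
    exact decide_eq_decide.1 this
  haveI : Countable (Set ℕ) := Function.Injective.countable hinj
  obtain ⟨f, hf⟩ := exists_injective_nat (Set ℕ)
  exact Function.cantor_injective f hf

/-- On a countable standard Borel space, every equivalence relation is smooth. -/
lemma smoothRel_of_countable {Y : Type} [MeasurableSpace Y] [StandardBorelSpace Y]
    [Countable Y] (F : Setoid Y) : SmoothRel F := by
  refine ⟨Y, ‹_›, ‹_›, fun y => (Quotient.mk F y).out, measurable_of_countable _, ?_⟩
  intro y y'
  constructor
  · intro h
    exact congrArg (fun q : Quotient F => q.out) (Quotient.sound h)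
  · intro h
    have h2 : Quotient.mk F y = Quotient.mk F y' := by
      have := congrArg (Quotient.mk F) h
      rwa [Quotient.out_eq, Quotient.out_eq] at this
    exact Quotient.eq.1 h2

/-- Key embedding: a measurable map into `X` whose images of distinct points are
`E`-inequivalent. -/
lemma exists_transversal_embedding {X Y : Type} [MeasurableSpace X] [StandardBorelSpace X]
    [Uncountable X] [MeasurableSpace Y] [StandardBorelSpace Y] (hYnc : ¬ Countable Y)
    (E : Setoid X) (hE : CBER E) :
    ∃ j : Y → X, Measurable j ∧ ∀ y y' : Y, E.r (j y) (j y') → y = y' := by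
  have hXnc : ¬ Countable X := not_countable_iff.2 ‹_›
  have eYC : Y ≃ᵐ CC := PolishSpace.measurableEquivOfNotCountable hYnc not_countable_CC
  have eCX : CC ≃ᵐ X := PolishSpace.measurableEquivOfNotCountable not_countable_CC hXnc
  set R : Set (CC × CC) := {p | E.r (eCX p.1) (eCX p.2)} with hRdef
  have hRmeas : MeasurableSet R := by
    have : R = (fun p : CC × CC => (eCX p.1, eCX p.2)) ⁻¹' {p : X × X | E.r p.1 p.2} := rfl
    rw [this]
    exact ((eCX.measurable.comp measurable_fst).prodMk
      (eCX.measurable.comp measurable_snd)) hE.1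
  have hRsec : ∀ x, {y | (x, y) ∈ R}.Countable := by
    intro x
    have : {y | (x, y) ∈ R} = eCX ⁻¹' {x' | E.r (eCX x) x'} := rfl
    rw [this]
    exact (hE.2 (eCX x)).preimage eCX.injective
  obtain ⟨φ, hφm, hφav⟩ := mycielski hRmeas hRsec
  refine ⟨fun y => eCX (φ (eYC y)), eCX.measurable.comp (hφm.comp eYC.measurable), ?_⟩
  intro y y' h
  by_contra hne
  exact hφav (eYC y) (eYC y') (fun hc => hne (eYC.injective hc)) h

/-- Every set measurable w.r.t. a generated σ-algebra is measurable w.r.t. the σ-algebra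
generated by countably many of the generators. -/
lemma exists_countable_generateFrom {α : Type*} {G : Set (Set α)} {s : Set α}
    (hs : MeasurableSet[MeasurableSpace.generateFrom G] s) :
    ∃ T ⊆ G, T.Countable ∧ MeasurableSet[MeasurableSpace.generateFrom T] s := by
  induction hs with
  | basic t ht =>
    exact ⟨{t}, singleton_subset_iff.2 ht, countable_singleton t,
      MeasurableSpace.measurableSet_generateFrom (mem_singleton t)⟩
  | empty =>
    exact ⟨∅, empty_subset _, countable_empty, @MeasurableSet.empty _ (MeasurableSpace.generateFrom ∅)⟩
  | compl t ht ih =>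
    obtain ⟨T, hsub, hc, hm⟩ := ih
    exact ⟨T, hsub, hc, hm.compl⟩
  | iUnion g hg ih =>
    choose T hsub hc hm using ih
    have hm' : ∀ n, MeasurableSet[MeasurableSpace.generateFrom (⋃ k, T k)] (g n) := fun n =>
      MeasurableSpace.generateFrom_mono (subset_iUnion T n) _ (hm n)
    exact ⟨⋃ n, T n, iUnion_subset hsub, countable_iUnion hc, MeasurableSet.iUnion hm'⟩

end Stmt9Aux

open Stmt9Aux
/-- if `F` is nonsmooth and `X` is uncountable, then some Borel subset of the
quotient product space `(X×Y, E×F)` is not in the product σ-algebra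
`Bor(X/E) ⊗ Bor(Y/F)`. -/
theorem stmt_9 {X Y : Type} [MeasurableSpace X] [StandardBorelSpace X] [Uncountable X]
    [MeasurableSpace Y] [StandardBorelSpace Y]
    (E : Setoid X) (hE : CBER E) (F : Setoid Y) (hF : CBER F)
    (hFns : ¬ SmoothRel F) :
    ∃ S : Set (Quotient E × Quotient F),
      MeasurableSet {p : X × Y | (Quotient.mk E p.1, Quotient.mk F p.2) ∈ S} ∧
      ¬ MeasurableSet S := by
  classical
  by_cases hYc : Countable Y
  · exact absurd (smoothRel_of_countable F) hFns
  -- the transversal embedding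
  obtain ⟨j, hjm, hj⟩ := exists_transversal_embedding hYc E hE
  -- the invariant Borel set `P` and its push-forward `S`
  set P : Set (X × Y) := {p | ∃ y', F.r p.2 y' ∧ E.r p.1 (j y')} with hPdef
  have hPmeas : MeasurableSet P := by
    set V : Set ((X × Y) × Y) := {q | F.r q.1.2 q.2 ∧ E.r q.1.1 (j q.2)} with hVdef
    have hV : MeasurableSet V := by
      have h1 : MeasurableSet {q : (X × Y) × Y | F.r q.1.2 q.2} :=
        ((measurable_snd.comp measurable_fst).prodMk measurable_snd)
          (hF.1 : MeasurableSet {p : Y × Y | F.r p.1 p.2})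
      have h2 : MeasurableSet {q : (X × Y) × Y | E.r q.1.1 (j q.2)} :=
        ((measurable_fst.comp measurable_fst).prodMk (hjm.comp measurable_snd))
          (hE.1 : MeasurableSet {p : X × X | E.r p.1 p.2})
      exact h1.inter h2
    have hPV : P = Prod.fst '' V := by
      ext ⟨x, y⟩
      constructor
      · rintro ⟨y', h1, h2⟩
        exact ⟨((x, y), y'), ⟨h1, h2⟩, rfl⟩
      · rintro ⟨⟨⟨x₀, y₀⟩, y'⟩, ⟨h1, h2⟩, heq⟩
        cases heq
        exact ⟨y', h1, h2⟩
    have hinj : Set.InjOn Prod.fst V := by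
      rintro ⟨⟨x₁, y₁⟩, z₁⟩ ⟨hq1, hq1'⟩ ⟨⟨x₂, y₂⟩, z₂⟩ ⟨hq2, hq2'⟩ heq
      cases heq
      have : z₁ = z₂ := hj _ _ (E.trans (E.symm hq1') hq2')
      rw [this]
    rw [hPV]
    exact hV.image_of_measurable_injOn measurable_fst hinj
  set S : Set (Quotient E × Quotient F) :=
    (fun p : X × Y => (Quotient.mk E p.1, Quotient.mk F p.2)) '' P with hSdef
  have hpull : {p : X × Y | (Quotient.mk E p.1, Quotient.mk F p.2) ∈ S} = P := by
    ext ⟨x, y⟩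
    simp only [mem_setOf_eq]
    constructor
    · rintro ⟨⟨x₀, y₀⟩, ⟨y', hFy, hEx⟩, heq⟩
      obtain ⟨h1, h2⟩ := Prod.ext_iff.1 heq
      have hE0 : E.r x₀ x := Quotient.eq.1 h1
      have hF0 : F.r y₀ y := Quotient.eq.1 h2
      exact ⟨y', F.trans (F.symm hF0) hFy, E.trans (E.symm hE0) hEx⟩
    · intro hp
      exact ⟨(x, y), hp, rfl⟩
  refine ⟨S, by rw [hpull]; exact hPmeas, ?_⟩
  -- now suppose `S` were product-measurable and derive smoothness of `F`
  intro hS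
  apply hFns
  have hS' : MeasurableSet[MeasurableSpace.generateFrom
      (Set.image2 (· ×ˢ ·) {A : Set (Quotient E) | MeasurableSet A}
        {B : Set (Quotient F) | MeasurableSet B})] S := by
    rw [generateFrom_prod]
    exact hS
  obtain ⟨T, hTsub, hTc, hTmem⟩ := exists_countable_generateFrom hS'
  set T' := insert ((∅ : Set (Quotient E)) ×ˢ (∅ : Set (Quotient F))) T with hT'def
  have hT'sub : T' ⊆ Set.image2 (· ×ˢ ·) {A : Set (Quotient E) | MeasurableSet A}
      {B : Set (Quotient F) | MeasurableSet B} := by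
    refine insert_subset ?_ hTsub
    exact mem_image2_of_mem MeasurableSet.empty MeasurableSet.empty
  have hT'mem : MeasurableSet[MeasurableSpace.generateFrom T'] S :=
    MeasurableSpace.generateFrom_mono (subset_insert _ _) _ hTmem
  obtain ⟨f, hf⟩ := (hTc.insert ((∅ : Set (Quotient E)) ×ˢ (∅ : Set (Quotient F)))).exists_eq_range (insert_nonempty _ _)
  have hrect : ∀ n, ∃ A : Set (Quotient E), ∃ B : Set (Quotient F),
      MeasurableSet A ∧ MeasurableSet B ∧ f n = A ×ˢ B := by
    intro n
    have hmem : f n ∈ T' := by rw [hT'def, hf]; exact mem_range_self n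
    obtain ⟨A, hA, B, hB, hfn⟩ := hT'sub hmem
    exact ⟨A, B, hA, hB, hfn.symm⟩
  choose A B hA hB hfn using hrect
  have hSgen : MeasurableSet[MeasurableSpace.generateFrom (range f)] S := by
    rw [← hf]; exact hT'mem
  -- the "atoms" property of the countably generated product σ-algebra
  have hatoms : ∀ (q : Quotient E) (r r' : Quotient F),
      (∀ n, r ∈ B n ↔ r' ∈ B n) → ((q, r) ∈ S ↔ (q, r') ∈ S) := by
    refine MeasurableSpace.generateFrom_induction
      (p := fun (t : Set (Quotient E × Quotient F)) _ => ∀ q r r',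
        (∀ n, r ∈ B n ↔ r' ∈ B n) → ((q, r) ∈ t ↔ (q, r') ∈ t))
      (C := range f) ?_ ?_ ?_ ?_ S hSgen
    · rintro t ⟨n, rfl⟩ - q r r' hrr'
      rw [hfn n]
      simp only [mem_prod]
      exact and_congr Iff.rfl (hrr' n)
    · intro q r r' _
      exact Iff.rfl
    · intro t ht hp q r r' hrr'
      exact not_congr (hp q r r' hrr')
    · intro g hg hp q r r' hrr'
      simp only [mem_iUnion]
      exact exists_congr fun n => hp n q r r' hrr'
  -- the smooth reduction
  refine ⟨ℕ → Bool, inferInstance, inferInstance,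
    fun y n => decide (Quotient.mk F y ∈ B n), ?_, ?_⟩
  · apply measurable_pi_lambda
    intro n
    have hBn : MeasurableSet (Quotient.mk F ⁻¹' B n) := by
      have := measurableSet_quotient.1 (hB n)
      rwa [Quotient.mk''_eq_mk] at this
    have heq : (fun y => decide (Quotient.mk F y ∈ B n)) =
        fun y => if Quotient.mk F y ∈ B n then true else false := by
      funext y
      by_cases h : Quotient.mk F y ∈ B n <;> simp [h]
    rw [heq]
    exact Measurable.ite hBn measurable_const measurable_const
  · intro y y'
    constructor
    · intro h
      exact congrArg (fun (q : Quotient F) (n : ℕ) => decide (q ∈ B n)) (Quotient.sound h)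
    · intro h
      have hcodes : ∀ n, Quotient.mk F y ∈ B n ↔ Quotient.mk F y' ∈ B n := by
        intro n
        have := congrFun h n
        exact decide_eq_decide.1 this
      have hy : (Quotient.mk E (j y), Quotient.mk F y) ∈ S :=
        ⟨(j y, y), ⟨y, F.refl y, E.refl (j y)⟩, rfl⟩
      have hy' := (hatoms _ _ _ hcodes).1 hy
      obtain ⟨⟨x₀, y₀⟩, ⟨y₁, hF01, hE01⟩, heq⟩ := hy'
      obtain ⟨h1, h2⟩ := Prod.ext_iff.1 heq
      have hEx : E.r x₀ (j y) := Quotient.eq.1 h1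
      have hFy : F.r y₀ y' := Quotient.eq.1 h2
      have hy1 : y₁ = y := hj _ _ (E.trans (E.symm hE01) hEx)
      subst hy1
      exact F.trans (F.symm hF01) hFy
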